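/- arXiv:2006.11076 — 2 statements merged into one kernel-verified Lean document; each statement's English description precedes it below -/
import Mathlib

section
/- Let h ≥ 30 and set x = sqrt(ln h / h). If a tournament H on h vertices admits an ordering π_0 of its vertices with f(π_0) ≥ (1/2)·C(h,2) + h^{3/2}·sqrt(ln h) (equivalently, a(H) ≤ (1/2)·C(h,2) − h^{3/2}·sqrt(ln h)), then (1/2 + x)^{f(π_0)} · (1/2 − x)^{b(π_0)} > h! · 2^{−C(h,2)}, where b(π_0) = C(h,2) − f(π_0). -/
set_option maxHeartbeats 1000000


open Finset

/-- Number of "forward" edges of the tournament `H` w.r.t. the ordering `π`. -/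
def fwd {h : ℕ} (H : Fin h → Fin h → Bool) (π : Equiv.Perm (Fin h)) : ℕ :=
  (Finset.univ.filter (fun e : Fin h × Fin h => H e.1 e.2 = true ∧ π e.1 < π e.2)).card

/-- Size of the automorphism group of `H`. -/
def aut {h : ℕ} (H : Fin h → Fin h → Bool) : ℕ :=
  (Finset.univ.filter (fun π : Equiv.Perm (Fin h) => ∀ u v, H (π u) (π v) = H u v)).card

/-- The typical density `d(H,p)`. -/
noncomputable def dens {h : ℕ} (H : Fin h → Fin h → Bool) (p : ℝ) : ℝ :=
  (aut H : ℝ)⁻¹ * ∑ π : Equiv.Perm (Fin h), p ^ fwd H π * (1 - p) ^ (h.choose 2 - fwd H π)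

/-- The bias polynomial `B(H,x) = d(H, x + 1/2)`. -/
noncomputable def bias {h : ℕ} (H : Fin h → Fin h → Bool) (x : ℝ) : ℝ :=
  dens H (x + 1/2)

/-- `H` is a tournament: irreflexive, and for distinct vertices exactly one direction. -/
def IsTournament {h : ℕ} (H : Fin h → Fin h → Bool) : Prop :=
  (∀ u, H u u = false) ∧ ∀ u v : Fin h, u ≠ v → H u v = !H v u

/-- `H` is transitive. -/
def IsTransitive {h : ℕ} (H : Fin h → Fin h → Bool) : Prop :=
  ∀ u v w : Fin h, H u v = true → H v w = true → H u w = true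

lemma fwd_le_choose {h : ℕ} (H : Fin h → Fin h → Bool) (π : Equiv.Perm (Fin h)) :
    fwd H π ≤ h.choose 2 := by
  classical
  rw [fwd]
  have h2 : ((Finset.univ : Finset (Fin h)).powersetCard 2).card = h.choose 2 := by
    simp [Finset.card_powersetCard]
  rw [← h2]
  apply Finset.card_le_card_of_injOn (fun e => {e.1, e.2})
  · intro e he
    simp only [Finset.mem_coe, Finset.mem_filter] at he ⊢
    have hne : e.1 ≠ e.2 := by
      intro hEq
      exact absurd he.2.2 (by rw [hEq]; exact lt_irrefl _)
    rw [Finset.mem_powersetCard]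
    refine ⟨fun a _ => Finset.mem_univ a, ?_⟩
    rw [Finset.card_insert_of_notMem (by simp [hne]), Finset.card_singleton]
  · intro e he e' he' hEq
    simp only [Finset.coe_filter, Set.mem_setOf_eq] at he he'
    simp only at hEq
    have h1 : e.1 ∈ ({e'.1, e'.2} : Finset (Fin h)) := by rw [← hEq]; simp
    have h2' : e.2 ∈ ({e'.1, e'.2} : Finset (Fin h)) := by rw [← hEq]; simp
    have hlt := he.2.2
    have hlt' := he'.2.2
    simp only [Finset.mem_insert, Finset.mem_singleton] at h1 h2'
    rcases h1 with h1 | h1 <;> rcases h2' with h2' | h2'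
    · rw [h1, h2'] at hlt; exact absurd hlt (lt_irrefl _)
    · exact Prod.ext h1 h2'
    · rw [h1, h2'] at hlt; exact absurd hlt' (lt_asymm hlt)
    · rw [h1, h2'] at hlt; exact absurd hlt (lt_irrefl _)

lemma log30_le : Real.log 30 ≤ 3.47 := by
  have h2 := Real.log_two_lt_d9
  have h1 : Real.log 30 ≤ Real.log 32 := Real.log_le_log (by norm_num) (by norm_num)
  have h32 : Real.log 32 = 5 * Real.log 2 := by
    rw [show (32:ℝ) = 2^5 by norm_num, Real.log_pow]; norm_num
  nlinarith

lemma one_le_log30 : 1 ≤ Real.log 30 := by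
  rw [Real.le_log_iff_exp_le (by norm_num)]
  have := Real.exp_one_lt_d9
  linarith

theorem aux_main {h : ℕ} (hh : 30 ≤ h) (H : Fin h → Fin h → Bool)
    (πe : Equiv.Perm (Fin h))
    (hfle : fwd H πe ≤ h.choose 2)
    (hf : (1/2) * (h.choose 2 : ℝ) + (h : ℝ) ^ ((3:ℝ)/2) * Real.sqrt (Real.log h)
      ≤ (fwd H πe : ℝ)) :
    (1/2 + Real.sqrt (Real.log h / h)) ^ (fwd H πe)
      * (1/2 - Real.sqrt (Real.log h / h)) ^ (h.choose 2 - fwd H πe)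
    > (h.factorial : ℝ) * (2 : ℝ) ^ (-(h.choose 2 : ℤ)) := by
  obtain ⟨f, hfeq⟩ : ∃ f, f = fwd H πe := ⟨_, rfl⟩
  obtain ⟨N, hNeq⟩ : ∃ N, N = h.choose 2 := ⟨_, rfl⟩
  rw [← hfeq, ← hNeq] at hfle hf ⊢
  have hcast : (30:ℝ) ≤ (h:ℝ) := by exact_mod_cast hh
  have hp : (0:ℝ) < h := by linarith
  set L := Real.log h with hLdef
  set X := Real.sqrt (L / h) with hXdef
  have hL1 : 1 ≤ L := le_trans one_le_log30 (Real.log_le_log (by norm_num) hcast)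
  have hL0 : 0 ≤ L := by linarith
  have hLle : L ≤ 0.116 * h := by
    have hd : Real.log ((h:ℝ)/30) ≤ (h:ℝ)/30 - 1 :=
      Real.log_le_sub_one_of_pos (by positivity)
    have he : Real.log ((h:ℝ)/30) = L - Real.log 30 := by
      rw [Real.log_div (by positivity) (by norm_num)]
    have h30 := log30_le
    rw [he] at hd
    linarith only [hd, h30, hcast]
  have hX0 : 0 ≤ X := Real.sqrt_nonneg _
  have hX2 : X^2 = L / h := Real.sq_sqrt (by positivity)
  have hX2le : X^2 ≤ 0.116 := by
    rw [hX2, div_le_iff₀ hp]; linarith only [hLle]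
  have hXle : X ≤ 0.341 := by linarith only [hX2le, sq_nonneg (X - 0.341)]
  have h2X1 : (0:ℝ) < 1 + 2*X := by linarith
  have h2X2 : (0:ℝ) < 1 - 2*X := by linarith
  have hhalf1 : (0:ℝ) < 1/2 + X := by linarith
  have hhalf2 : (0:ℝ) < 1/2 - X := by linarith
  set A := Real.log (1 + 2*X) with hAdef
  set Bm := Real.log (1 - 2*X) with hBdef
  have hA : 1.18 * X ≤ A := by
    have l := Real.log_le_sub_one_of_pos (inv_pos.mpr h2X1)
    rw [Real.log_inv] at l
    have hinvle : (1 + 2*X)⁻¹ ≤ 1 - 1.18*X := by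
      rw [← one_div, div_le_iff₀ h2X1]
      nlinarith only [hX0, hXle, mul_nonneg hX0 (sub_nonneg.mpr hXle)]
    linarith
  have hB : Bm ≤ -(2*X) := by
    have := Real.log_le_sub_one_of_pos h2X2
    linarith
  have hABge : -(7.6 * X^2) ≤ A + Bm := by
    have hppos : (0:ℝ) < 1 - 4*X^2 := by linarith only [hX2le]
    have hprod : A + Bm = Real.log (1 - 4*X^2) := by
      rw [hAdef, hBdef, ← Real.log_mul (ne_of_gt h2X1) (ne_of_gt h2X2)]
      ring_nf
    have l := Real.log_le_sub_one_of_pos (inv_pos.mpr hppos)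
    rw [Real.log_inv] at l
    have hinvle : (1 - 4*X^2)⁻¹ ≤ 1 + 7.6*X^2 := by
      rw [← one_div, div_le_iff₀ hppos]
      nlinarith only [sq_nonneg X, mul_nonneg (sub_nonneg.mpr hX2le) (sq_nonneg X)]
    rw [hprod]; linarith
  have hFN : (f:ℝ) ≤ (N:ℝ) := Nat.cast_le.mpr hfle
  have hN0 : (0:ℝ) ≤ (N:ℝ) := by positivity
  have hNle : (N:ℝ) * 2 ≤ (h:ℝ)^2 := by
    have h1 : N * 2 ≤ h * h := by
      rw [hNeq, Nat.choose_two_right]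
      calc h * (h-1) / 2 * 2 ≤ h * (h-1) := Nat.div_mul_le_self _ _
        _ ≤ h * h := Nat.mul_le_mul_left _ (Nat.sub_le _ _)
    have h2 : ((N * 2 : ℕ) : ℝ) ≤ ((h * h : ℕ) : ℝ) := Nat.cast_le.mpr h1
    push_cast at h2
    linarith only [h2]
  -- rewrite hf
  have hsp : (0:ℝ) < Real.sqrt (h:ℝ) := Real.sqrt_pos.mpr hp
  have hsqrt_h : Real.sqrt (h:ℝ) = (h:ℝ) ^ ((1:ℝ)/2) := Real.sqrt_eq_rpow _
  have hXsplit : X = Real.sqrt L / Real.sqrt (h:ℝ) := by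
    rw [hXdef, Real.sqrt_div hL0]
  have hpow : (h:ℝ) ^ ((3:ℝ)/2) * Real.sqrt (h:ℝ) = (h:ℝ)^2 := by
    rw [hsqrt_h, ← Real.rpow_add hp,
      show (3:ℝ)/2 + 1/2 = ((2:ℕ):ℝ) by norm_num, Real.rpow_natCast]
  have hM : (h:ℝ) ^ ((3:ℝ)/2) * Real.sqrt L = (h:ℝ)^2 * X := by
    rw [hXsplit, ← hpow]
    field_simp
  have hfR : (N:ℝ)/2 + (h:ℝ)^2 * X ≤ (f:ℝ) := by
    rw [← hM]; linarith [hf]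
  have hX2h : (h:ℝ)^2 * X^2 = (h:ℝ) * L := by
    rw [hX2]; field_simp
  have hAmB : 3.18 * X ≤ A - Bm := by linarith
  have hFg : (h:ℝ)^2 * X ≤ (f:ℝ) - (N:ℝ)/2 := by linarith
  have hFg0 : (0:ℝ) ≤ (f:ℝ) - (N:ℝ)/2 := le_trans (by positivity) hFg
  have t1 : (h:ℝ)^2/4 * (-(7.6*X^2)) ≤ ((N:ℝ)/2) * (A + Bm) := by
    have a1 : ((N:ℝ)/2) * (-(7.6*X^2)) ≤ ((N:ℝ)/2) * (A + Bm) :=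
      mul_le_mul_of_nonneg_left hABge (by linarith)
    have a2 : (h:ℝ)^2/4 * (-(7.6*X^2)) ≤ ((N:ℝ)/2) * (-(7.6*X^2)) :=
      mul_le_mul_of_nonpos_right (by linarith only [hNle]) (by linarith only [sq_nonneg X])
    linarith
  have t2 : ((h:ℝ)^2*X) * (3.18*X) ≤ ((f:ℝ) - (N:ℝ)/2) * (A - Bm) :=
    mul_le_mul hFg hAmB (by positivity) hFg0
  have key : 1.28 * ((h:ℝ) * L) ≤ (f:ℝ) * A + ((N:ℝ) - (f:ℝ)) * Bm := by
    have e1 : (f:ℝ) * A + ((N:ℝ) - (f:ℝ)) * Bm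
        = ((N:ℝ)/2)*(A+Bm) + ((f:ℝ) - (N:ℝ)/2)*(A-Bm) := by ring
    rw [e1]; linarith only [t1, t2, hX2h]
  have hfact : Real.log (h.factorial : ℝ) ≤ (h:ℝ) * L := by
    have h1 : ((h.factorial : ℕ) : ℝ) ≤ ((h^h : ℕ) : ℝ) := Nat.cast_le.mpr (Nat.factorial_le_pow h)
    have h2 : Real.log (h.factorial : ℝ) ≤ Real.log ((h:ℝ)^h) := by
      apply Real.log_le_log (by positivity)
      push_cast at h1 ⊢; exact h1
    rw [Real.log_pow] at h2
    exact h2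
  have hhl : (0:ℝ) < (h:ℝ) * L := by positivity
  have hLHSpos : (0:ℝ) < (1/2 + X) ^ f * (1/2 - X) ^ (N - f) := by positivity
  have hRHSpos : (0:ℝ) < (h.factorial : ℝ) * (2 : ℝ) ^ (-(N : ℤ)) := by
    have h1 : (0:ℝ) < (h.factorial : ℝ) := by positivity
    positivity
  rw [gt_iff_lt, ← Real.exp_log hLHSpos, ← Real.exp_log hRHSpos, Real.exp_lt_exp]
  rw [Real.log_mul (by positivity) (by positivity),
      Real.log_mul (by positivity) (by positivity),
      Real.log_pow, Real.log_pow, Real.log_zpow]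
  have hcast2 : ((N - f : ℕ) : ℝ) = (N:ℝ) - (f:ℝ) := by
    rw [Nat.cast_sub hfle]
  have e2 : Real.log (1/2 + X) = A - Real.log 2 := by
    rw [show (1:ℝ)/2 + X = (1+2*X)/2 by ring,
        Real.log_div (ne_of_gt h2X1) (by norm_num)]
  have e3 : Real.log (1/2 - X) = Bm - Real.log 2 := by
    rw [show (1:ℝ)/2 - X = (1-2*X)/2 by ring,
        Real.log_div (ne_of_gt h2X2) (by norm_num)]
  rw [hcast2, e2, e3]
  push_cast
  nlinarith only [key, hfact, hhl]

theorem key_inequality_pi0 {h : ℕ} (hh : 30 ≤ h) (H : Fin h → Fin h → Bool)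
    (hH : IsTournament H) (π₀ : Equiv.Perm (Fin h))
    (hf : (1/2) * (h.choose 2 : ℝ) + (h : ℝ) ^ ((3:ℝ)/2) * Real.sqrt (Real.log h)
      ≤ (fwd H π₀ : ℝ)) :
    (1/2 + Real.sqrt (Real.log h / h)) ^ (fwd H π₀)
      * (1/2 - Real.sqrt (Real.log h / h)) ^ (h.choose 2 - fwd H π₀)
    > (h.factorial : ℝ) * (2 : ℝ) ^ (-(h.choose 2 : ℤ)) := by
  exact aux_main hh H π₀ (fwd_le_choose H π₀) hf
end

section
/- Let h ≥ 30, x = sqrt(ln h / h), and let f, b be nonnegative reals with f + b = C(h,2), f − b ≥ 2·h^{3/2}·sqrt(ln h), and b ≤ (1/2)·C(h,2). Then (1 + 2x)^{f − b} · (1 − 4x^2)^{b} > h!. In particular, (1 + 2·sqrt(ln h / h))^{2 h^{3/2} sqrt(ln h)} · (1 − 4 ln h / h)^{h^2/4} > h^h ≥ h!. -/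
set_option maxHeartbeats 1000000 in
theorem key_analytic_inequality {h : ℕ} (hh : 30 ≤ h) :
    (∀ f b : ℝ, 0 ≤ f → 0 ≤ b → f + b = (h.choose 2 : ℝ) →
      2 * (h : ℝ) ^ ((3:ℝ)/2) * Real.sqrt (Real.log h) ≤ f - b →
      b ≤ (1/2) * (h.choose 2 : ℝ) →
      (1 + 2 * Real.sqrt (Real.log h / h)) ^ (f - b)
        * (1 - 4 * (Real.sqrt (Real.log h / h)) ^ 2) ^ b
      > (h.factorial : ℝ)) ∧
    ((1 + 2 * Real.sqrt (Real.log h / h)) ^ (2 * (h : ℝ) ^ ((3:ℝ)/2) * Real.sqrt (Real.log h))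
        * (1 - 4 * Real.log h / h) ^ ((h : ℝ) ^ 2 / 4)
      > (h : ℝ) ^ (h : ℕ) ∧ (h : ℝ) ^ (h : ℕ) ≥ (h.factorial : ℝ)) := by
  have hr : (30:ℝ) ≤ (h:ℝ) := by exact_mod_cast hh
  have hhpos : (0:ℝ) < (h:ℝ) := by linarith
  have hL : 0 < Real.log h := Real.log_pos (by linarith)
  set x := Real.sqrt (Real.log h / h) with hxdef
  set D := 2 * (h : ℝ) ^ ((3:ℝ)/2) * Real.sqrt (Real.log h) with hDdef
  have hx0 : 0 ≤ x := Real.sqrt_nonneg _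
  have hx2 : x ^ 2 = Real.log h / h := Real.sq_sqrt (by positivity)
  -- Step 1 : log h ≤ 0.1145 * h
  have hs : Real.log h ≤ 0.1145 * h := by
    have e1 : (30:ℝ) ≤ Real.exp 3.435 := by
      have e2 : Real.exp 3.435 = Real.exp 1 ^ (3:ℕ) * Real.exp 0.10875 ^ (4:ℕ) := by
        rw [← Real.exp_nat_mul, ← Real.exp_nat_mul, ← Real.exp_add]; norm_num
      have e3 := Real.exp_one_gt_d9
      have e4 := Real.add_one_le_exp (0.10875:ℝ)
      rw [e2]
      have a3 : (2.7182818283:ℝ) ^ (3:ℕ) ≤ Real.exp 1 ^ (3:ℕ) :=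
        pow_le_pow_left₀ (by norm_num) e3.le 3
      have b4 : (1.10875:ℝ) ^ (4:ℕ) ≤ Real.exp 0.10875 ^ (4:ℕ) :=
        pow_le_pow_left₀ (by norm_num) (by linarith) 4
      calc (30:ℝ) ≤ (2.7182818283:ℝ) ^ (3:ℕ) * (1.10875:ℝ) ^ (4:ℕ) := by norm_num
        _ ≤ Real.exp 1 ^ (3:ℕ) * Real.exp 0.10875 ^ (4:ℕ) :=
            mul_le_mul a3 b4 (by norm_num) (by positivity)
    have e5 : Real.log 30 ≤ 3.435 := (Real.log_le_iff_le_exp (by norm_num)).2 e1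
    have e6 : Real.log ((h:ℝ)/30) = Real.log h - Real.log 30 :=
      Real.log_div (by positivity) (by norm_num)
    have e7 : Real.log ((h:ℝ)/30) ≤ (h:ℝ)/30 - 1 :=
      Real.log_le_sub_one_of_pos (by positivity)
    rw [e6] at e7
    linarith
  have hx2b : x ^ 2 ≤ 0.1145 := by
    rw [hx2, div_le_iff₀ hhpos]; linarith
  have hxb : x ≤ 0.4 := by nlinarith
  have hb2 : (0.542:ℝ) ≤ 1 - 4 * x ^ 2 := by nlinarith
  have hb2pos : (0:ℝ) < 1 - 4 * x ^ 2 := by linarith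
  have h1p : (0:ℝ) < 1 + 2 * x := by linarith
  -- log 1.8 ≥ 0.58
  have hlog18 : (0.58:ℝ) ≤ Real.log 1.8 := by
    rw [Real.le_log_iff_exp_le (by norm_num)]
    have hb := Real.exp_bound' (x := 0.58) (by norm_num) (by norm_num) (n := 4) (by norm_num)
    norm_num [Finset.sum_range_succ, Nat.factorial] at hb ⊢
    linarith
  -- concavity chord : log (1+2x) ≥ 1.45 x
  have hchord : 1.45 * x ≤ Real.log (1 + 2 * x) := by
    have hcc := (strictConcaveOn_log_Ioi.concaveOn).2
      (Set.mem_Ioi.2 (by norm_num : (0:ℝ) < 1))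
      (Set.mem_Ioi.2 (by norm_num : (0:ℝ) < 1.8))
      (show (0:ℝ) ≤ 1 - x / 0.4 by
        rw [sub_nonneg, div_le_one (by norm_num)]; linarith)
      (show (0:ℝ) ≤ x / 0.4 by positivity)
      (by ring)
    simp only [smul_eq_mul, Real.log_one, mul_zero, mul_one, zero_add, add_zero] at hcc
    have harg : 1 - x / 0.4 + x / 0.4 * 1.8 = 1 + 2 * x := by ring
    rw [harg] at hcc
    have hmul : x / 0.4 * 0.58 ≤ x / 0.4 * Real.log 1.8 :=
      mul_le_mul_of_nonneg_left hlog18 (by positivity)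
    linarith
  -- key exponent identity : D * x = 2 h log h
  have hDx : D * x = 2 * (h:ℝ) * Real.log h := by
    have hsh : (0:ℝ) < Real.sqrt h := Real.sqrt_pos.2 hhpos
    have h32 : (h:ℝ) ^ ((3:ℝ)/2) = (h:ℝ) * Real.sqrt h := by
      rw [show ((3:ℝ)/2) = 1 + 1/2 by norm_num, Real.rpow_add hhpos, Real.rpow_one,
        ← Real.sqrt_eq_rpow]
    have hsq : Real.sqrt (Real.log h) * Real.sqrt (Real.log h) = Real.log h :=
      Real.mul_self_sqrt hL.le
    rw [hDdef, hxdef, Real.sqrt_div hL.le, h32]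
    field_simp
    linear_combination hsq
  have hD0 : 0 ≤ D := by
    rw [hDdef]; positivity
  have hxx : (h:ℝ) ^ 2 * x ^ 2 = (h:ℝ) * Real.log h := by
    rw [hx2]; field_simp
  -- lower bound t1
  have t1 : 2.9 * ((h:ℝ) * Real.log h) ≤ D * Real.log (1 + 2 * x) := by
    have hm := mul_le_mul_of_nonneg_left hchord hD0
    calc 2.9 * ((h:ℝ) * Real.log h) = 1.45 * (D * x) := by rw [hDx]; ring
      _ = D * (1.45 * x) := by ring
      _ ≤ D * Real.log (1 + 2 * x) := hm
  -- lower bound t2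
  have l2'' : -(4 * x ^ 2) / 0.542 ≤ Real.log (1 - 4 * x ^ 2) := by
    have l2 := Real.one_sub_inv_le_log_of_pos hb2pos
    have e : 1 - (1 - 4 * x ^ 2)⁻¹ = -(4 * x ^ 2) / (1 - 4 * x ^ 2) := by
      field_simp
      ring
    have hd : 4 * x ^ 2 / (1 - 4 * x ^ 2) ≤ 4 * x ^ 2 / 0.542 :=
      div_le_div_of_nonneg_left (by positivity) (by norm_num) hb2
    rw [e] at l2
    rw [neg_div] at l2 ⊢
    have : -(4 * x ^ 2 / 0.542) ≤ -(4 * x ^ 2 / (1 - 4 * x ^ 2)) := neg_le_neg hd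
    linarith
  have l2' : -(4 * x ^ 2) * 1.846 ≤ Real.log (1 - 4 * x ^ 2) := by
    have hre : -(4 * x ^ 2) / (0.542:ℝ) = -(x ^ 2) * (2000/271) := by ring
    rw [hre] at l2''
    have := sq_nonneg x
    linarith
  have t2 : -(1.846 * ((h:ℝ) * Real.log h)) ≤ (h:ℝ) ^ 2 / 4 * Real.log (1 - 4 * x ^ 2) := by
    have hm := mul_le_mul_of_nonneg_left l2' (show (0:ℝ) ≤ (h:ℝ) ^ 2 / 4 by positivity)
    calc -(1.846 * ((h:ℝ) * Real.log h)) = (h:ℝ) ^ 2 / 4 * (-(4 * x ^ 2) * 1.846) := by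
          rw [← hxx]; ring
      _ ≤ _ := hm
  -- core inequality
  have hP : ((h:ℝ) ^ (h:ℕ)) < (1 + 2 * x) ^ D * (1 - 4 * x ^ 2) ^ ((h:ℝ) ^ 2 / 4) := by
    have hlogP : Real.log ((1 + 2 * x) ^ D * (1 - 4 * x ^ 2) ^ ((h:ℝ) ^ 2 / 4))
        = D * Real.log (1 + 2 * x) + (h:ℝ) ^ 2 / 4 * Real.log (1 - 4 * x ^ 2) := by
      rw [Real.log_mul (by positivity) (by positivity), Real.log_rpow h1p,
        Real.log_rpow hb2pos]
    have key : (h:ℝ) * Real.log h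
        < D * Real.log (1 + 2 * x) + (h:ℝ) ^ 2 / 4 * Real.log (1 - 4 * x ^ 2) := by
      have hpos : 0 < (h:ℝ) * Real.log h := by positivity
      linarith
    have hPpos : 0 < (1 + 2 * x) ^ D * (1 - 4 * x ^ 2) ^ ((h:ℝ) ^ 2 / 4) := by positivity
    have hpowpos : (0:ℝ) < (h:ℝ) ^ (h:ℕ) := by positivity
    rw [← Real.exp_log hpowpos, ← Real.exp_log hPpos]
    apply Real.exp_lt_exp.2
    rw [hlogP, Real.log_pow]
    push_cast
    exact key
  have hfact : (h.factorial : ℝ) ≤ (h:ℝ) ^ (h:ℕ) := by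
    exact_mod_cast Nat.factorial_le_pow h
  constructor
  · intro f b hf hb hsum hfb hble
    have hA : (1 + 2 * x) ^ D ≤ (1 + 2 * x) ^ (f - b) :=
      Real.rpow_le_rpow_of_exponent_le (by linarith) hfb
    have hble' : b ≤ (h:ℝ) ^ 2 / 4 := by
      have hc2 : (h.choose 2 : ℝ) = (h:ℝ) * ((h:ℝ) - 1) / 2 := Nat.cast_choose_two (K := ℝ) h
      rw [hc2] at hble
      nlinarith [hr, hble]
    have hB : (1 - 4 * x ^ 2) ^ ((h:ℝ) ^ 2 / 4) ≤ (1 - 4 * x ^ 2) ^ b :=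
      Real.rpow_le_rpow_of_exponent_ge hb2pos (by linarith [sq_nonneg x]) hble'
    have hmul : (1 + 2 * x) ^ D * (1 - 4 * x ^ 2) ^ ((h:ℝ) ^ 2 / 4)
        ≤ (1 + 2 * x) ^ (f - b) * (1 - 4 * x ^ 2) ^ b :=
      mul_le_mul hA hB (by positivity) (by positivity)
    calc (h.factorial : ℝ) ≤ (h:ℝ) ^ (h:ℕ) := hfact
      _ < (1 + 2 * x) ^ D * (1 - 4 * x ^ 2) ^ ((h:ℝ) ^ 2 / 4) := hP
      _ ≤ _ := hmul
  · constructor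
    · have hbase : 1 - 4 * Real.log h / h = 1 - 4 * x ^ 2 := by
        rw [hx2]; ring
      rw [hbase]
      exact hP
    · exact hfact
end
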